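/- Let r ≥ 1, let n be a positive integer, and let δ be a positive divisor of n. The number of cyclic subgroups of order δ of the direct product C_n × ⋯ × C_n of r copies of C_n equals φ_r(δ)/φ(δ), where φ_r is the Jordan totient function of order r and φ is Euler's totient function. Equivalently, φ(δ) times the number of cyclic subgroups of order δ equals φ_r(δ). -/

import Mathlib

open Finset

lemma aux_zmod_torsion {n : ℕ} [NeZero n] (m : ℕ) (hm0 : 0 < m) (hmn : m ∣ n) :
    Fintype.card {y : ZMod n // m • y = 0} = m := by
  classical
  rw [Fintype.card_subtype]
  have h := (sum_card_addOrderOf_eq_card_nsmul_eq_zero (G := ZMod n) hm0.ne').symm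
  rw [show ({y : ZMod n | m • y = 0} : Finset _) = Finset.univ.filter fun y => m • y = 0 from rfl]
  rw [h]
  conv_rhs => rw [← Nat.sum_totient m]
  refine Finset.sum_congr rfl fun d hd => ?_
  have hdn : d ∣ Fintype.card (ZMod n) := by
    rw [ZMod.card]; exact (Nat.dvd_of_mem_divisors hd).trans hmn
  exact IsAddCyclic.card_addOrderOf_eq_totient hdn

lemma aux_pi_torsion {n : ℕ} [NeZero n] (r : ℕ) (m : ℕ) (hm0 : 0 < m) (hmn : m ∣ n) :
    Fintype.card {x : Fin r → ZMod n // m • x = 0} = m ^ r := by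
  classical
  have e1 : {x : Fin r → ZMod n // m • x = 0} ≃ ∀ _ : Fin r, {y : ZMod n // m • y = 0} := by
    refine (Equiv.subtypeEquiv (Equiv.refl _) fun x => ?_).trans Equiv.subtypePiEquivPi
    simp [funext_iff]
  rw [Fintype.card_congr e1, Fintype.card_pi, Finset.prod_const, Finset.card_univ,
    Fintype.card_fin, aux_zmod_torsion m hm0 hmn]

lemma aux_zmult_cyclic {G : Type*} [AddGroup G] (a : G) :
    IsAddCyclic (AddSubgroup.zmultiples a) := by
  refine ⟨⟨⟨a, AddSubgroup.mem_zmultiples a⟩, fun y => ?_⟩⟩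
  obtain ⟨k, hk⟩ := AddSubgroup.mem_zmultiples_iff.mp y.2
  exact ⟨k, Subtype.ext (by simpa using hk)⟩

lemma aux_count (G : Type*) [AddCommGroup G] [Fintype G] (δ : ℕ) :
    Fintype.card {x : G // addOrderOf x = δ} =
      Nat.totient δ * Nat.card {H : AddSubgroup G // IsAddCyclic H ∧ Nat.card H = δ} := by
  classical
  have : Finite (AddSubgroup G) :=
    Finite.of_injective (fun H => (H : Set G)) SetLike.coe_injective
  set S := {H : AddSubgroup G // IsAddCyclic H ∧ Nat.card H = δ} with hS
  have : Fintype S := Fintype.ofFinite S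
  let F : {x : G // addOrderOf x = δ} → S := fun x =>
    ⟨AddSubgroup.zmultiples x.1, aux_zmult_cyclic x.1, by
      rw [Nat.card_zmultiples, x.2]⟩
  have e := (Equiv.sigmaFiberEquiv F).symm
  rw [Fintype.card_congr e, Fintype.card_sigma]
  have key : ∀ H : S, Fintype.card {x : {x : G // addOrderOf x = δ} // F x = H}
      = Nat.totient δ := by
    intro H
    have e2 : {x : {x : G // addOrderOf x = δ} // F x = H} ≃ {y : H.1 // addOrderOf y = δ} :=
      { toFun := fun x => ⟨⟨x.1.1, by
          have h : AddSubgroup.zmultiples x.1.1 = H.1 := congrArg Subtype.val x.2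
          rw [← h]; exact AddSubgroup.mem_zmultiples _⟩, by
          rw [AddSubgroup.addOrderOf_mk]; exact x.1.2⟩
        invFun := fun y => ⟨⟨y.1.1, by rw [AddSubgroup.addOrderOf_coe]; exact y.2⟩, by
          apply Subtype.ext
          show AddSubgroup.zmultiples y.1.1 = H.1
          apply AddSubgroup.eq_of_le_of_card_ge
          · rw [AddSubgroup.zmultiples_le]; exact y.1.2
          · rw [H.2.2, Nat.card_zmultiples, AddSubgroup.addOrderOf_coe, y.2]⟩
        left_inv := fun x => Subtype.ext (Subtype.ext rfl)
        right_inv := fun y => Subtype.ext (Subtype.ext rfl) }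
    rw [Fintype.card_congr e2]
    haveI : IsAddCyclic H.1 := H.2.1
    have hcard : Fintype.card H.1 = δ := by
      rw [← Nat.card_eq_fintype_card, H.2.2]
    have := IsAddCyclic.card_addOrderOf_eq_totient (α := H.1) (d := δ) (by rw [hcard])
    rw [Fintype.card_subtype]
    exact this
  rw [Finset.sum_congr rfl fun H _ => key H, Finset.sum_const, Finset.card_univ,
    Nat.card_eq_fintype_card, smul_eq_mul, mul_comm]

theorem number_of_cyclic_subgroups_of_order_eq_jordan_div_totient (r : ℕ) (hr : 1 ≤ r)
    (n : ℕ) (hn : 0 < n) (δ : ℕ) (hδ : 0 < δ) (hδn : δ ∣ n) :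
    (Nat.totient δ : ℤ) *
        Nat.card {H : AddSubgroup (Fin r → ZMod n) //
          IsAddCyclic H ∧ Nat.card H = δ} =
      ∑ e ∈ δ.divisors, (e : ℤ) ^ r * ArithmeticFunction.moebius (δ / e) := by
  classical
  haveI : NeZero n := ⟨hn.ne'⟩
  set G := (Fin r → ZMod n)
  set f : ℕ → ℤ := fun d => (Fintype.card {x : G // addOrderOf x = d} : ℤ) with hf
  set g : ℕ → ℤ := fun m => (m : ℤ) ^ r with hg
  have key : ∀ m > 0, m ∈ {m : ℕ | m ∣ n} → ∑ i ∈ m.divisors, f i = g m := by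
    intro m hm0 hmn
    have h := sum_card_addOrderOf_eq_card_nsmul_eq_zero (G := G) hm0.ne'
    have h2 : (#{x : G | m • x = 0} : ℕ) = m ^ r := by
      rw [← Fintype.card_subtype, aux_pi_torsion r m hm0 hmn]
    have h3 : ∑ d ∈ m.divisors, (#{x : G | addOrderOf x = d} : ℕ) = m ^ r := by
      rw [h, h2]
    have h4 : ∀ d, f d = ((#{x : G | addOrderOf x = d} : ℕ) : ℤ) := by
      intro d; rw [hf]; norm_num [Fintype.card_subtype]
    simp only [h4, hg, ← Nat.cast_sum, h3]
    push_cast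
    ring
  have inv := (ArithmeticFunction.sum_eq_iff_sum_smul_moebius_eq_on {m : ℕ | m ∣ n}
    (fun a b hab hb => hab.trans hb)).mp key δ hδ hδn
  rw [Nat.sum_divisorsAntidiagonal' (f := fun a b => (ArithmeticFunction.moebius a) • g b)] at inv
  have lhs : (Nat.totient δ : ℤ) *
      Nat.card {H : AddSubgroup G // IsAddCyclic H ∧ Nat.card H = δ} = f δ := by
    simp only [hf]
    rw [aux_count G δ]
    push_cast
    ring
  rw [lhs, ← inv]
  refine Finset.sum_congr rfl fun e he => ?_
  simp only [hg, zsmul_eq_mul, Int.cast_id]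
  ring
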